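/- Let 𝕋 = ℝ/2πℤ with Lebesgue measure, and let g : 𝕋 → ℝ be continuous with g ≥ 0 and ∫_𝕋 g = 1. For each integer k define β_k := ∫_𝕋 |g(x)·(e^{−ikx}/√(2π) − ∫_𝕋 g(y) e^{−iky}/√(2π) dy)|² dx. Then β_k converges to (1/(2π))·∫_𝕋 g(x)² dx as |k| → ∞, and consequently there exists δ > 0 such that β_k ≥ δ for every integer k ≠ 0. -/

import Mathlib

open MeasureTheory
open AddCircle ENNReal

instance : Fact ((0 : ℝ) < 2 * Real.pi) := ⟨by positivity⟩

/-- `β_k = ‖G(e^{-ikx}/√(2π))‖²_{L²(𝕋)}` where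
`(Gℓ)(x) = g(x) (ℓ(x) − ∫ g(y) ℓ(y) dy)` on `𝕋 = ℝ/2πℤ`. -/
noncomputable def betaCoef (g : AddCircle (2 * Real.pi) → ℝ) (k : ℤ) : ℝ :=
  ∫ x : AddCircle (2 * Real.pi),
    ‖(g x : ℂ) * (fourier (-k) x / (Real.sqrt (2 * Real.pi) : ℂ) -
        ∫ y : AddCircle (2 * Real.pi),
          (g y : ℂ) * (fourier (-k) y / (Real.sqrt (2 * Real.pi) : ℂ)))‖ ^ 2


-- Riemann-Lebesgue on the circle, via the Hilbert basis
lemma rl_aux (f : AddCircle (2 * Real.pi) → ℂ) (hf : Continuous f) :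
    Filter.Tendsto (fun k : ℤ => ∫ x : AddCircle (2 * Real.pi), fourier (-k) x * f x)
      Filter.cofinite (nhds 0) := by
  have h1 : Filter.Tendsto (fun k : ℤ => fourierCoeff f k) Filter.cofinite (nhds 0) := by
    set F : Lp ℂ 2 (@haarAddCircle (2 * Real.pi) _) :=
      ContinuousMap.toLp (E := ℂ) 2 haarAddCircle ℂ ⟨f, hf⟩ with hF
    have hFf : ∀ k : ℤ, fourierCoeff (F : AddCircle (2 * Real.pi) → ℂ) k = fourierCoeff f k := by
      intro k
      apply integral_congr_ae
      filter_upwards [ContinuousMap.coeFn_toLp (p := 2) (μ := @haarAddCircle (2*Real.pi) _) (𝕜 := ℂ) ⟨f, hf⟩] with x hx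
      rw [hF, hx]; rfl
    have hsum : Summable (fun k : ℤ => ‖fourierBasis.repr F k‖ ^ (2 : ℝ≥0∞).toReal) :=
      (lp.memℓp (fourierBasis.repr F)).summable (by norm_num)
    have h2 := hsum.tendsto_cofinite_zero
    have h3 : Filter.Tendsto (fun k : ℤ => ‖fourierBasis.repr F k‖) Filter.cofinite (nhds 0) := by
      have h4 := (Real.continuous_sqrt.tendsto 0).comp h2
      simp only [Function.comp_def, Real.sqrt_zero] at h4
      convert h4 using 2 with k
      rw [show ((2:ℝ≥0∞).toReal) = ((2:ℕ):ℝ) by norm_num, Real.rpow_natCast,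
        Real.sqrt_sq (norm_nonneg _)]
    have h5 : Filter.Tendsto (fun k : ℤ => fourierBasis.repr F k) Filter.cofinite (nhds 0) :=
      tendsto_zero_iff_norm_tendsto_zero.mpr h3
    simp only [fourierBasis_repr, hFf] at h5
    exact h5
  have h6 : ∀ k : ℤ, (∫ x : AddCircle (2 * Real.pi), fourier (-k) x * f x) =
      (2 * Real.pi) • fourierCoeff f k := by
    intro k
    rw [fourierCoeff, volume_eq_smul_haarAddCircle, integral_smul_measure,
      ENNReal.toReal_ofReal Real.two_pi_pos.le]
    simp [smul_smul, smul_eq_mul]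
  simp only [h6]
  have := h1.const_smul (2 * Real.pi)
  simpa using this

lemma cont_integrable {f : AddCircle (2 * Real.pi) → ℝ} (hf : Continuous f) :
    Integrable f := hf.integrable_of_hasCompactSupport (HasCompactSupport.of_compactSpace f)

lemma cont_integrableC {f : AddCircle (2 * Real.pi) → ℂ} (hf : Continuous f) :
    Integrable f := hf.integrable_of_hasCompactSupport (HasCompactSupport.of_compactSpace f)

lemma norm_fourier_aux (n : ℤ) (x : AddCircle (2 * Real.pi)) :
    Complex.normSq (fourier n x) = 1 := by
  rw [fourier_apply]; exact Circle.normSq_coe _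

lemma betaCoef_eq (g : AddCircle (2 * Real.pi) → ℝ) (hg_cont : Continuous g) (k : ℤ) :
    betaCoef g k = (∫ x : AddCircle (2 * Real.pi), (g x) ^ 2) * (1 / (2 * Real.pi))
      + (∫ x : AddCircle (2 * Real.pi), (g x) ^ 2) *
          Complex.normSq (∫ y : AddCircle (2 * Real.pi),
            (g y : ℂ) * (fourier (-k) y / (Real.sqrt (2 * Real.pi) : ℂ)))
      - 2 * (((starRingEnd ℂ) (∫ y : AddCircle (2 * Real.pi),
            (g y : ℂ) * (fourier (-k) y / (Real.sqrt (2 * Real.pi) : ℂ)))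
          / (Real.sqrt (2 * Real.pi) : ℂ))
          * (∫ x : AddCircle (2 * Real.pi), (g x : ℂ) ^ 2 * fourier (-k) x)).re := by
  set s : ℝ := Real.sqrt (2 * Real.pi) with hs
  have hs2 : s * s = 2 * Real.pi := Real.mul_self_sqrt (by positivity)
  set c : ℂ := ∫ y : AddCircle (2 * Real.pi), (g y : ℂ) * (fourier (-k) y / (s : ℂ)) with hc
  have hpt : ∀ x : AddCircle (2 * Real.pi),
      ‖(g x : ℂ) * (fourier (-k) x / (s : ℂ) - c)‖ ^ 2
        = (g x) ^ 2 * (1 / (2 * Real.pi)) + (g x) ^ 2 * Complex.normSq c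
          - 2 * (((g x : ℂ)) ^ 2 * ((starRingEnd ℂ) c / (s : ℂ) * fourier (-k) x)).re := by
    intro x
    rw [norm_mul, mul_pow, Complex.norm_real, Real.norm_eq_abs, sq_abs, Complex.sq_norm,
      Complex.normSq_sub]
    have h1 : Complex.normSq (fourier (-k) x / (s : ℂ)) = 1 / (2 * Real.pi) := by
      rw [Complex.normSq_div, norm_fourier_aux, Complex.normSq_ofReal, hs2]
    rw [h1]
    have h2 : (fourier (-k) x / (s : ℂ) * (starRingEnd ℂ) c)
        = (starRingEnd ℂ) c / (s : ℂ) * fourier (-k) x := by ring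
    rw [h2]
    have h3 : ((g x : ℂ) ^ 2 * ((starRingEnd ℂ) c / (s : ℂ) * fourier (-k) x)).re
        = (g x) ^ 2 * ((starRingEnd ℂ) c / (s : ℂ) * fourier (-k) x).re := by
      rw [show ((g x : ℂ)) ^ 2 = ((((g x) ^ 2 : ℝ)) : ℂ) by push_cast; ring,
        Complex.re_ofReal_mul]
    rw [h3]; ring
  rw [betaCoef]
  simp_rw [← hs, ← hc, hpt]
  have hcont2 : Continuous (fun x : AddCircle (2 * Real.pi) => (g x) ^ 2) := hg_cont.pow 2
  have hI1 : Integrable (fun x : AddCircle (2 * Real.pi) => (g x) ^ 2 * (1 / (2 * Real.pi))) :=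
    cont_integrable (hcont2.mul continuous_const)
  have hI2 : Integrable (fun x : AddCircle (2 * Real.pi) => (g x) ^ 2 * Complex.normSq c) :=
    cont_integrable (hcont2.mul continuous_const)
  have hcF : Continuous (fun x : AddCircle (2 * Real.pi) =>
      (g x : ℂ) ^ 2 * ((starRingEnd ℂ) c / (s : ℂ) * fourier (-k) x)) :=
    ((Complex.continuous_ofReal.comp hg_cont).pow 2).mul
      (continuous_const.mul (fourier (-k)).continuous)
  have hI3 : Integrable (fun x : AddCircle (2 * Real.pi) =>
      2 * ((g x : ℂ) ^ 2 * ((starRingEnd ℂ) c / (s : ℂ) * fourier (-k) x)).re) :=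
    cont_integrable (continuous_const.mul (Complex.continuous_re.comp hcF))
  have hI12 : Integrable (fun x : AddCircle (2 * Real.pi) =>
      (g x) ^ 2 * (1 / (2 * Real.pi)) + (g x) ^ 2 * Complex.normSq c) := hI1.add hI2
  rw [integral_sub hI12 hI3, integral_add hI1 hI2,
    integral_mul_const, integral_mul_const]
  congr 1
  rw [integral_const_mul]
  have h4 : (∫ a : AddCircle (2 * Real.pi),
      ((g a : ℂ) ^ 2 * ((starRingEnd ℂ) c / (s : ℂ) * fourier (-k) a)).re)
      = (∫ a : AddCircle (2 * Real.pi),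
          (g a : ℂ) ^ 2 * ((starRingEnd ℂ) c / (s : ℂ) * fourier (-k) a)).re := by
    have h5 := integral_re (μ := volume) (cont_integrableC hcF)
    simpa only [RCLike.re_eq_complex_re] using h5
  rw [h4]
  have : (∫ x : AddCircle (2 * Real.pi),
      (g x : ℂ) ^ 2 * ((starRingEnd ℂ) c / (s : ℂ) * fourier (-k) x))
      = (starRingEnd ℂ) c / (s : ℂ) * ∫ x : AddCircle (2 * Real.pi),
          (g x : ℂ) ^ 2 * fourier (-k) x := by
    rw [← integral_const_mul]
    congr 1; funext x; ring
  rw [this]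

-- fourier is multiplicative in the point
lemma fourier_add_pt (n : ℤ) (x y : AddCircle (2 * Real.pi)) :
    fourier n (x + y) = fourier n x * fourier n y := by
  simp only [fourier_apply, smul_add]
  rw [AddCircle.toCircle_add]
  push_cast
  ring

lemma fourier_ne_zero (n : ℤ) (x : AddCircle (2 * Real.pi)) : fourier n x ≠ 0 := by
  intro h
  have := congrArg Complex.normSq h
  rw [fourier_apply, Circle.normSq_coe, map_zero] at this
  norm_num at this

lemma fourier_nonconst (k : ℤ) (hk : k ≠ 0) (x₁ : AddCircle (2 * Real.pi)) (r : ℝ)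
    (hr : 0 < r) (hr2 : r < 2 * Real.pi / |(k : ℝ)|)
    (heq : fourier (-k) (((r : ℝ) : AddCircle (2 * Real.pi)) + x₁) = fourier (-k) x₁) :
    False := by
  have hk' : (0 : ℝ) < |(k : ℝ)| := by
    simp only [abs_pos, Ne, Int.cast_eq_zero]; exact hk
  rw [fourier_add_pt] at heq
  have h1 : fourier (-k) (((r : ℝ) : AddCircle (2 * Real.pi))) = 1 :=
    mul_right_cancel₀ (fourier_ne_zero (-k) x₁) (heq.trans (one_mul _).symm)
  rw [fourier_coe_apply, Complex.exp_eq_one_iff] at h1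
  obtain ⟨n, hn⟩ := h1
  have hπ : (Real.pi : ℂ) ≠ 0 := Complex.ofReal_ne_zero.2 Real.pi_ne_zero
  have hden : ((2 * Real.pi : ℝ) : ℂ) ≠ 0 := by
    push_cast; exact mul_ne_zero two_ne_zero hπ
  rw [div_eq_iff hden] at hn
  have h4 : (2 * (Real.pi : ℂ) * Complex.I) * ((-k : ℂ) * r)
      = (2 * (Real.pi : ℂ) * Complex.I) * ((n : ℂ) * (2 * Real.pi)) := by
    push_cast at hn ⊢
    linear_combination hn
  have h5 := mul_left_cancel₀
    (mul_ne_zero (mul_ne_zero two_ne_zero hπ) Complex.I_ne_zero) h4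
  have h4r : (-(k : ℝ)) * r = (n : ℝ) * (2 * Real.pi) := by exact_mod_cast h5
  have h5' : |(-(k : ℝ)) * r| < 2 * Real.pi := by
    rw [abs_mul, abs_neg, abs_of_pos hr]
    calc |(k : ℝ)| * r < |(k : ℝ)| * (2 * Real.pi / |(k : ℝ)|) :=
          mul_lt_mul_of_pos_left hr2 hk'
      _ = 2 * Real.pi := by field_simp
  rw [h4r, abs_mul, abs_of_pos Real.two_pi_pos] at h5'
  have h7 : |(n : ℝ)| < 1 := by
    nlinarith [Real.two_pi_pos, abs_nonneg ((n : ℝ))]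
  have h8 : n = 0 := by
    have h9 : |n| < 1 := by exact_mod_cast h7
    rw [abs_lt] at h9; omega
  rw [h8] at h4r
  simp only [Int.cast_zero, zero_mul, neg_mul, neg_eq_zero, mul_eq_zero] at h4r
  rcases h4r with h | h
  · exact hk (by exact_mod_cast h)
  · linarith

lemma betaCoef_pos (g : AddCircle (2 * Real.pi) → ℝ) (hg_cont : Continuous g)
    (hg_int : ∫ x : AddCircle (2 * Real.pi), g x = 1) (k : ℤ) (hk : k ≠ 0) :
    0 < betaCoef g k := by
  set s : ℝ := Real.sqrt (2 * Real.pi) with hs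
  have hspos : 0 < s := Real.sqrt_pos.2 (by positivity)
  set c : ℂ := ∫ y : AddCircle (2 * Real.pi), (g y : ℂ) * (fourier (-k) y / (s : ℂ)) with hc
  set h : AddCircle (2 * Real.pi) → ℂ :=
    fun x => (g x : ℂ) * (fourier (-k) x / (s : ℂ) - c) with hh
  have hh_cont : Continuous h :=
    (Complex.continuous_ofReal.comp hg_cont).mul
      (((fourier (-k)).continuous.div_const _).sub continuous_const)
  have key : ∃ x₀, h x₀ ≠ 0 := by
    by_contra hcon
    push_neg at hcon
    have hx₁ : ∃ x₁, g x₁ ≠ 0 := by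
      by_contra h2
      push_neg at h2
      rw [show g = fun _ => (0 : ℝ) from funext h2] at hg_int
      simp at hg_int
    obtain ⟨x₁, hx₁⟩ := hx₁
    have hsC : ((s : ℝ) : ℂ) ≠ 0 := by
      simp [Complex.ofReal_eq_zero]; positivity
    have hfc : ∀ x, g x ≠ 0 → fourier (-k) x = (s : ℂ) * c := by
      intro x hx
      have h0 := hcon x
      rcases mul_eq_zero.1 h0 with h1 | h1
      · exact absurd (Complex.ofReal_eq_zero.1 h1) hx
      · have h2 : fourier (-k) x / (s : ℂ) = c := sub_eq_zero.1 h1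
        rw [div_eq_iff hsC] at h2
        rw [h2]; ring
    set φ : ℝ → AddCircle (2 * Real.pi) := fun r => ((r : AddCircle (2 * Real.pi)) + x₁) with hφdef
    have hφ : Continuous φ := by
      exact Continuous.add (f := fun r : ℝ => (r : AddCircle (2 * Real.pi))) (g := fun _ => x₁)
        continuous_quotient_mk' continuous_const
    have hU : IsOpen {x : AddCircle (2 * Real.pi) | g x ≠ 0} := by
      have := (isOpen_compl_singleton (x := (0 : ℝ))).preimage hg_cont
      exact this
    have hV : IsOpen (φ ⁻¹' {x : AddCircle (2 * Real.pi) | g x ≠ 0}) := hU.preimage hφ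
    have h0V : (0 : ℝ) ∈ φ ⁻¹' {x : AddCircle (2 * Real.pi) | g x ≠ 0} := by
      simp only [Set.mem_preimage, hφdef, Set.mem_setOf_eq]
      rw [show (((0 : ℝ) : AddCircle (2 * Real.pi)) + x₁) = x₁ by
        rw [show ((0 : ℝ) : AddCircle (2 * Real.pi)) = 0 from rfl, zero_add]]
      exact hx₁
    obtain ⟨ε, hε, hball⟩ := Metric.isOpen_iff.1 hV 0 h0V
    have hk' : (0 : ℝ) < |(k : ℝ)| := by
      simp only [abs_pos, Ne, Int.cast_eq_zero]; exact hk
    set r : ℝ := min (ε / 2) (Real.pi / |(k : ℝ)|) with hr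
    have hrpos : 0 < r := lt_min (by linarith) (by positivity)
    have hrmem : r ∈ Metric.ball (0 : ℝ) ε := by
      rw [Metric.mem_ball, Real.dist_eq, sub_zero, abs_of_pos hrpos]
      calc r ≤ ε / 2 := min_le_left _ _
      _ < ε := by linarith
    have hgr : g (φ r) ≠ 0 := hball hrmem
    have heq : fourier (-k) (((r : ℝ) : AddCircle (2 * Real.pi)) + x₁) = fourier (-k) x₁ := by
      rw [hfc _ hgr, hfc _ hx₁]
    exact fourier_nonconst k hk x₁ r hrpos
      (by
        calc r ≤ Real.pi / |(k : ℝ)| := min_le_right _ _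
        _ < 2 * Real.pi / |(k : ℝ)| := by
            have := Real.pi_pos
            rw [div_lt_div_iff₀ hk' hk']
            nlinarith) heq
  obtain ⟨x₀, hx₀⟩ := key
  have hbeta : betaCoef g k = ∫ x : AddCircle (2 * Real.pi), ‖h x‖ ^ 2 := rfl
  rw [hbeta]
  exact Continuous.integral_pos_of_hasCompactSupport_nonneg_nonzero
    (hh_cont.norm.pow 2) (HasCompactSupport.of_compactSpace _)
    (fun x => by positivity) (x := x₀) (by
      simp only [ne_eq, pow_eq_zero_iff, norm_eq_zero]
      simpa using hx₀)


/-- If `g : 𝕋 → ℝ` is continuous, nonnegative, with `∫ g = 1`, then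
`β_k → (1/2π) ∫ g²` as `|k| → ∞`, and consequently there is a `δ > 0` with
`β_k ≥ δ` for every `k ≠ 0`. -/
theorem betaCoef_limit_and_bound (g : AddCircle (2 * Real.pi) → ℝ)
    (hg_cont : Continuous g) (hg_nonneg : ∀ x, 0 ≤ g x)
    (hg_int : ∫ x : AddCircle (2 * Real.pi), g x = 1) :
    Filter.Tendsto (fun k : ℤ => betaCoef g k) Filter.cofinite
      (nhds ((1 / (2 * Real.pi)) * ∫ x : AddCircle (2 * Real.pi), (g x) ^ 2)) ∧
    ∃ δ > (0 : ℝ), ∀ k : ℤ, k ≠ 0 → δ ≤ betaCoef g k := by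
  set s : ℝ := Real.sqrt (2 * Real.pi) with hs
  set A : ℝ := ∫ x : AddCircle (2 * Real.pi), (g x) ^ 2 with hA
  set c : ℤ → ℂ := fun k => ∫ y : AddCircle (2 * Real.pi),
    (g y : ℂ) * (fourier (-k) y / (s : ℂ)) with hcdef
  set b : ℤ → ℂ := fun k => ∫ x : AddCircle (2 * Real.pi),
    (g x : ℂ) ^ 2 * fourier (-k) x with hbdef
  have hgC : Continuous (fun x : AddCircle (2 * Real.pi) => ((g x : ℂ))) :=
    Complex.continuous_ofReal.comp hg_cont
  have hc : Filter.Tendsto c Filter.cofinite (nhds 0) := by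
    apply (rl_aux (fun y => (g y : ℂ) / (s : ℂ)) (hgC.div_const _)).congr
    intro k
    show (∫ y : AddCircle (2 * Real.pi), fourier (-k) y * ((g y : ℂ) / (s : ℂ)))
      = ∫ y : AddCircle (2 * Real.pi), (g y : ℂ) * (fourier (-k) y / (s : ℂ))
    congr 1; funext y; ring
  have hb : Filter.Tendsto b Filter.cofinite (nhds 0) := by
    apply (rl_aux (fun x => (g x : ℂ) ^ 2) (hgC.pow 2)).congr
    intro k
    show (∫ x : AddCircle (2 * Real.pi), fourier (-k) x * (g x : ℂ) ^ 2)
      = ∫ x : AddCircle (2 * Real.pi), (g x : ℂ) ^ 2 * fourier (-k) x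
    congr 1; funext x; ring
  have heq : ∀ k : ℤ, betaCoef g k = A * (1 / (2 * Real.pi))
      + A * Complex.normSq (c k)
      - 2 * (((starRingEnd ℂ) (c k) / (s : ℂ)) * b k).re :=
    fun k => betaCoef_eq g hg_cont k
  have t1 : Filter.Tendsto (fun k : ℤ => Complex.normSq (c k)) Filter.cofinite (nhds 0) := by
    have := (Complex.continuous_normSq.tendsto 0).comp hc
    simpa only [Function.comp_def, map_zero] using this
  have t2 : Filter.Tendsto (fun k : ℤ => (((starRingEnd ℂ) (c k) / (s : ℂ)) * b k).re)
      Filter.cofinite (nhds 0) := by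
    have hconj : Filter.Tendsto (fun k : ℤ => (starRingEnd ℂ) (c k)) Filter.cofinite (nhds 0) := by
      have := (Complex.continuous_conj.tendsto 0).comp hc
      simpa only [Function.comp_def, map_zero] using this
    have hm : Filter.Tendsto (fun k : ℤ => ((starRingEnd ℂ) (c k) / (s : ℂ)) * b k)
        Filter.cofinite (nhds 0) := by
      have := (hconj.div_const ((s : ℝ) : ℂ)).mul hb
      simpa only [zero_div, zero_mul] using this
    have := (Complex.continuous_re.tendsto 0).comp hm
    simpa only [Function.comp_def, Complex.zero_re] using this
  have htendsto : Filter.Tendsto (fun k : ℤ => betaCoef g k) Filter.cofinite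
      (nhds ((1 / (2 * Real.pi)) * A)) := by
    simp only [heq]
    have hlim := ((tendsto_const_nhds (x := A * (1 / (2 * Real.pi)))
      (f := Filter.cofinite (α := ℤ))).add (t1.const_mul A)).sub (t2.const_mul 2)
    have hv : (1 / (2 * Real.pi)) * A = A * (1 / (2 * Real.pi)) + A * 0 - 2 * 0 := by ring
    rw [hv]
    exact hlim
  refine ⟨htendsto, ?_⟩
  -- positivity of A
  have hx₁ : ∃ x₁, g x₁ ≠ 0 := by
    by_contra h2
    push_neg at h2
    rw [show g = fun _ => (0 : ℝ) from funext h2] at hg_int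
    simp at hg_int
  obtain ⟨x₁, hx₁⟩ := hx₁
  have hApos : 0 < A := by
    rw [hA]
    exact Continuous.integral_pos_of_hasCompactSupport_nonneg_nonzero
      (hg_cont.pow 2) (HasCompactSupport.of_compactSpace _)
      (fun x => sq_nonneg _) (x := x₁) (pow_ne_zero 2 hx₁)
  set L : ℝ := (1 / (2 * Real.pi)) * A with hL
  have hLpos : 0 < L := by
    rw [hL]; positivity
  have hev : ∀ᶠ k in Filter.cofinite, L / 2 < betaCoef g k :=
    htendsto.eventually (eventually_gt_nhds (half_lt_self hLpos))
  have hfin : {k : ℤ | ¬ L / 2 < betaCoef g k}.Finite := Filter.eventually_cofinite.mp hev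
  set F : Finset ℤ := hfin.toFinset with hF
  set t : Finset ℝ := insert (L / 2) ((F.erase 0).image (betaCoef g)) with ht
  have htne : t.Nonempty := ⟨L / 2, Finset.mem_insert_self _ _⟩
  refine ⟨t.min' htne, ?_, ?_⟩
  · rw [gt_iff_lt, Finset.lt_min'_iff]
    intro y hy
    rw [ht] at hy
    rcases Finset.mem_insert.1 hy with h | h
    · rw [h]; exact half_pos hLpos
    · obtain ⟨k, hkmem, hky⟩ := Finset.mem_image.1 h
      rw [← hky]
      exact betaCoef_pos g hg_cont hg_int k (Finset.mem_erase.1 hkmem).1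
  · intro k hk
    by_cases hkF : k ∈ F
    · exact Finset.min'_le t _ (Finset.mem_insert_of_mem
        (Finset.mem_image_of_mem _ (Finset.mem_erase.2 ⟨hk, hkF⟩)))
    · have hk2 : L / 2 < betaCoef g k := by
        by_contra h2
        exact hkF (hfin.mem_toFinset.2 h2)
      calc t.min' htne ≤ L / 2 := Finset.min'_le t _ (Finset.mem_insert_self _ _)
        _ ≤ betaCoef g k := hk2.le
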